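/- Let X₃ uniform on {-1, 1} and X₄ with conditional law (X₄ | X₃ = x₃) ~ N(x₃, 1), and f(x₃, x₄) = x₃ + 2x₄. The marginal pure local effect of feature 4 is φ_m(x) = E_{X₃}[f(X₃, x₄)] - E[f(X₃,X₄)] = 2x₄, while the conditional pure local effect is φ_c(x) = E[f(X₃, x₄) | X₄ = x₄] - E[f] = 2x₄ + E[X₃ | X₄ = x₄], and E[X₃ | X₄ = x₄] = tanh(x₄). Restricted to the region {x₃ = 1}, both effects equal 2x₄ + 1 - E^Ω[f] up to the common regional centering, i.e., the marginal and conditional pure effects agree on the region. -/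

import Mathlib

open MeasureTheory ProbabilityTheory Real

/-- Standard normal density. -/
noncomputable def stdNormalPdf (y : ℝ) : ℝ :=
  Real.exp (-(y ^ 2) / 2) / Real.sqrt (2 * Real.pi)

/-- Law of `X₃`: uniform on `{-1, 1}`. -/
noncomputable def lawX3 : Measure ℝ :=
  (1 / 2 : ENNReal) • Measure.dirac (-1) + (1 / 2 : ENNReal) • Measure.dirac 1

/-- Joint law of `(X₃, X₄)` with `X₄ | X₃ = s ~ N(s, 1)`. -/
noncomputable def lawX34 : Measure (ℝ × ℝ) :=
  (1 / 2 : ENNReal) • ((Measure.dirac (-1 : ℝ)).prod (gaussianReal (-1) 1))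
    + (1 / 2 : ENNReal) • ((Measure.dirac (1 : ℝ)).prod (gaussianReal 1 1))

/-- The model `f(x₃, x₄) = x₃ + 2 x₄`. -/
def gmodel (x₃ x₄ : ℝ) : ℝ := x₃ + 2 * x₄

/-- `E[X₃ | X₄ = x₄]` computed from the Gaussian mixture densities. -/
noncomputable def condExpX3 (x₄ : ℝ) : ℝ :=
  (stdNormalPdf (x₄ - 1) - stdNormalPdf (x₄ + 1))
    / (stdNormalPdf (x₄ - 1) + stdNormalPdf (x₄ + 1))

/- ### Auxiliary lemmas -/

lemma gaussianPDFReal_one_eq (m x : ℝ) :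
    gaussianPDFReal m 1 x = (Real.sqrt (2 * π))⁻¹ * rexp (-(1/2) * (x - m) ^ 2) := by
  simp only [gaussianPDFReal, NNReal.coe_one, mul_one]
  rw [show (-(x - m) ^ 2 / 2 : ℝ) = -(1/2) * (x - m) ^ 2 by ring]

lemma integrable_shifted_gauss (m : ℝ) :
    Integrable (fun y : ℝ => (y + m) * ((Real.sqrt (2 * π))⁻¹ * rexp (-(1/2) * y ^ 2))) := by
  have ha := integrable_mul_exp_neg_mul_sq (b := 1/2) (by norm_num)
  have hb := integrable_exp_neg_mul_sq (b := 1/2) (by norm_num)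
  have h := (ha.add (hb.const_mul m)).const_mul (Real.sqrt (2 * π))⁻¹
  refine h.congr (ae_of_all _ fun y => ?_)
  simp only [Pi.add_apply]
  ring

lemma integrable_id_gauss (m : ℝ) :
    Integrable (fun x : ℝ => x) (gaussianReal m 1) := by
  rw [gaussianReal_of_var_ne_zero _ one_ne_zero]
  rw [integrable_withDensity_iff (measurable_gaussianPDF m 1)
    (ae_of_all _ fun x => ENNReal.ofReal_lt_top)]
  have h := (integrable_shifted_gauss m).comp_sub_right m
  refine h.congr (ae_of_all _ fun x => ?_)
  simp only [gaussianPDF]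
  rw [ENNReal.toReal_ofReal (gaussianPDFReal_nonneg m 1 x), gaussianPDFReal_one_eq]
  ring

lemma integral_odd_gauss : ∫ y : ℝ, y * rexp (-(1/2) * y ^ 2) = 0 := by
  have h := integral_neg_eq_self (fun y : ℝ => y * rexp (-(1/2) * y ^ 2)) volume
  simp only [neg_sq, neg_mul, integral_neg] at h ⊢
  linarith

lemma integral_id_gauss (m : ℝ) : ∫ x, x ∂(gaussianReal m 1) = m := by
  rw [gaussianReal_of_var_ne_zero _ one_ne_zero]
  have hmeas : Measurable fun x : ℝ => (gaussianPDFReal m 1 x).toNNReal :=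
    (measurable_gaussianPDFReal m 1).real_toNNReal
  have hdens : (gaussianPDF m 1) = fun x => ((gaussianPDFReal m 1 x).toNNReal : ENNReal) := by
    funext x; rfl
  rw [hdens, integral_withDensity_eq_integral_smul hmeas]
  have hsm : ∀ x : ℝ, (gaussianPDFReal m 1 x).toNNReal • x = gaussianPDFReal m 1 x * x := by
    intro x
    rw [NNReal.smul_def, Real.coe_toNNReal _ (gaussianPDFReal_nonneg m 1 x), smul_eq_mul]
  simp only [hsm]
  have hshift := integral_add_right_eq_self (μ := volume) (fun x : ℝ => gaussianPDFReal m 1 x * x) m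
  rw [← hshift]
  have heq : ∀ y : ℝ, gaussianPDFReal m 1 (y + m) * (y + m)
      = (Real.sqrt (2 * π))⁻¹ * (y * rexp (-(1/2) * y ^ 2))
        + m * (Real.sqrt (2 * π))⁻¹ * rexp (-(1/2) * y ^ 2) := by
    intro y
    rw [gaussianPDFReal_one_eq]
    ring_nf
  simp only [heq]
  have ha := (integrable_mul_exp_neg_mul_sq (b := 1/2) (by norm_num)).const_mul
    (Real.sqrt (2 * π))⁻¹
  have hb := (integrable_exp_neg_mul_sq (b := 1/2) (by norm_num)).const_mul
    (m * (Real.sqrt (2 * π))⁻¹)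
  have hsplit := integral_add ha hb
  rw [hsplit, integral_const_mul, integral_const_mul, integral_odd_gauss, mul_zero, zero_add]
  have hg := integral_gaussian (1/2 : ℝ)
  rw [hg]
  have : Real.sqrt (π / (1/2)) = Real.sqrt (2 * π) := by norm_num [mul_comm]
  rw [this, mul_assoc, inv_mul_cancel₀ (by positivity : Real.sqrt (2 * π) ≠ 0), mul_one]

lemma integrable_gmodel_gauss (a m : ℝ) :
    Integrable (fun y : ℝ => gmodel a y) (gaussianReal m 1) := by
  have h1 : Integrable (fun _ : ℝ => a) (gaussianReal m 1) := integrable_const a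
  have h2 := (integrable_id_gauss m).const_mul 2
  simpa [gmodel] using h1.add h2

lemma integral_gmodel_gauss (a m : ℝ) :
    ∫ y, gmodel a y ∂(gaussianReal m 1) = a + 2 * m := by
  have h1 : Integrable (fun _ : ℝ => a) (gaussianReal m 1) := integrable_const a
  have h2 := (integrable_id_gauss m).const_mul 2
  rw [show (fun y : ℝ => gmodel a y) = fun y : ℝ => a + 2 * y from rfl,
    integral_add h1 h2, integral_const, integral_const_mul, integral_id_gauss]
  simp

lemma integral_gmodel_lawX34 : ∫ p, gmodel p.1 p.2 ∂lawX34 = 0 := by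
  have hmeas : AEStronglyMeasurable (fun p : ℝ × ℝ => gmodel p.1 p.2)
      ((Measure.dirac (-1 : ℝ)).prod (gaussianReal (-1) 1)
        + ((Measure.dirac (1 : ℝ)).prod (gaussianReal 1 1))) := by
    exact (Continuous.aestronglyMeasurable (by continuity))
  have key : ∀ a m : ℝ, ∫ p, gmodel p.1 p.2 ∂((Measure.dirac a).prod (gaussianReal m 1))
      = a + 2 * m := by
    intro a m
    rw [Measure.dirac_prod, integral_map measurable_prodMk_left.aemeasurable
      (Continuous.aestronglyMeasurable (by continuity))]
    exact integral_gmodel_gauss a m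
  have hint : ∀ a m : ℝ, Integrable (fun p : ℝ × ℝ => gmodel p.1 p.2)
      ((Measure.dirac a).prod (gaussianReal m 1)) := by
    intro a m
    rw [Measure.dirac_prod]
    rw [integrable_map_measure (Continuous.aestronglyMeasurable (by continuity))
      measurable_prodMk_left.aemeasurable]
    exact integrable_gmodel_gauss a m
  rw [lawX34, integral_add_measure ((hint (-1) (-1)).smul_measure (by norm_num))
    ((hint 1 1).smul_measure (by norm_num)),
    integral_smul_measure, integral_smul_measure, key, key]
  norm_num

lemma integral_gmodel_lawX3 (x₄ : ℝ) : ∫ x₃, gmodel x₃ x₄ ∂lawX3 = 2 * x₄ := by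
  have hd : ∀ a : ℝ, Integrable (fun x₃ => gmodel x₃ x₄) (Measure.dirac a) := by
    intro a
    refine (integrable_const (gmodel a x₄)).congr ?_
    rw [Filter.EventuallyEq, MeasureTheory.ae_dirac_eq]
    exact Filter.eventually_pure.mpr rfl
  rw [lawX3, integral_add_measure ((hd _).smul_measure (by norm_num))
    ((hd _).smul_measure (by norm_num)), integral_smul_measure, integral_smul_measure,
    integral_dirac, integral_dirac]
  simp only [gmodel]
  norm_num
  ring

lemma condExp_eq_tanh (x : ℝ) : condExpX3 x = Real.tanh x := by
  have hs : (0:ℝ) < Real.sqrt (2 * π) := Real.sqrt_pos.mpr (by positivity)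
  have e1 : rexp (-((x - 1) ^ 2) / 2) = rexp (-(x ^ 2 + 1) / 2) * rexp x := by
    rw [← Real.exp_add]; congr 1; ring
  have e2 : rexp (-((x + 1) ^ 2) / 2) = rexp (-(x ^ 2 + 1) / 2) * rexp (-x) := by
    rw [← Real.exp_add]; congr 1; ring
  have hc : (0:ℝ) < rexp (-(x ^ 2 + 1) / 2) := Real.exp_pos _
  have hpos : (0:ℝ) < rexp x + rexp (-x) := by positivity
  rw [condExpX3, stdNormalPdf, stdNormalPdf, e1, e2, Real.tanh_eq_sinh_div_cosh,
    Real.sinh_eq, Real.cosh_eq]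
  have hsne : Real.sqrt (2 * π) ≠ 0 := hs.ne'
  have hcne : rexp (-(x ^ 2 + 1) / 2) ≠ 0 := hc.ne'
  have hpne : rexp x + rexp (-x) ≠ 0 := hpos.ne'
  rw [div_sub_div_same, ← add_div, div_div_div_cancel_right₀ hsne,
    div_div_div_cancel_right₀ (two_ne_zero)]
  rw [← mul_sub, ← mul_add, mul_div_mul_left _ _ hcne]

theorem distribution_disagreement_example :
    (∀ x₄ : ℝ,
      (∫ x₃, gmodel x₃ x₄ ∂lawX3) - (∫ p, gmodel p.1 p.2 ∂lawX34) = 2 * x₄) ∧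
    (∀ x₄ : ℝ, condExpX3 x₄ = Real.tanh x₄) ∧
    (∀ x₄ : ℝ,
      ((condExpX3 x₄ + 2 * x₄) - (∫ p, gmodel p.1 p.2 ∂lawX34))
        = 2 * x₄ + Real.tanh x₄) ∧
    (∀ x₄ : ℝ,
      ((∫ x₃, gmodel x₃ x₄ ∂(Measure.dirac (1 : ℝ)))
          - (∫ x₄', gmodel 1 x₄' ∂(gaussianReal 1 1)))
        = (2 * x₄ + 1) - (∫ x₄', gmodel 1 x₄' ∂(gaussianReal 1 1))) := by
  refine ⟨fun x₄ => ?_, condExp_eq_tanh, fun x₄ => ?_, fun x₄ => ?_⟩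
  · rw [integral_gmodel_lawX3, integral_gmodel_lawX34]; ring
  · rw [integral_gmodel_lawX34, condExp_eq_tanh]; ring
  · rw [integral_dirac]
    simp only [gmodel]
    ring
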